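/- (Uniqueness in the λ-H representation, pointwise-anchored form.) Let U ⊆ ℝ² be a nonempty connected open set and let φ, ψ : ℝ² → ℝ³ be two conformal immersions on U with the same conformal factor λ. Let n_φ := (φ_u × φ_v)/‖φ_u × φ_v‖ and n_ψ := (ψ_u × ψ_v)/‖ψ_u × ψ_v‖ be their unit normals, and suppose that on all of U the mean curvatures agree, ⟨Δφ, n_φ⟩/(2λ²) = ⟨Δψ, n_ψ⟩/(2λ²), and the quantities μ agree, (∂_z φ_z, n_φ) = (∂_z ψ_z, n_ψ). If in addition there is a point p ∈ U with φ(p) = ψ(p), φ_u(p) = ψ_u(p) and φ_v(p) = ψ_v(p), then φ = ψ on U. -/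

import Mathlib

open Complex

noncomputable section

/-- Euclidean 3-space. -/
abbrev E3 : Type := EuclideanSpace ℝ (Fin 3)

/-- Partial derivative in the first (u) coordinate direction. -/
def pu {F : Type} [NormedAddCommGroup F] [NormedSpace ℝ F]
    (f : ℝ × ℝ → F) (p : ℝ × ℝ) : F := fderiv ℝ f p (1, 0)

/-- Partial derivative in the second (v) coordinate direction. -/
def pv {F : Type} [NormedAddCommGroup F] [NormedSpace ℝ F]
    (f : ℝ × ℝ → F) (p : ℝ × ℝ) : F := fderiv ℝ f p (0, 1)

/-- Cross product on ℝ³. -/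
def cross (a b : E3) : E3 :=
  (WithLp.equiv 2 (Fin 3 → ℝ)).symm
    ![a 1 * b 2 - a 2 * b 1, a 2 * b 0 - a 0 * b 2, a 0 * b 1 - a 1 * b 0]

/-- The Euclidean inner product on ℝ³. -/
def ip (a b : E3) : ℝ := @inner ℝ _ _ a b

/-- `φ` is a smooth conformal immersion on the open set `U ⊆ ℝ²` with
(smooth, positive) conformal factor `lam`:  ⟨φ_u,φ_u⟩ = λ², ⟨φ_v,φ_v⟩ = λ²,
⟨φ_u,φ_v⟩ = 0 at every point of `U`. -/
def IsConfImm (U : Set (ℝ × ℝ)) (φ : ℝ × ℝ → E3) (lam : ℝ × ℝ → ℝ) : Prop :=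
  IsOpen U ∧ ContDiffOn ℝ (⊤ : ℕ∞) φ U ∧ ContDiffOn ℝ (⊤ : ℕ∞) lam U ∧
    ∀ p ∈ U, 0 < lam p ∧
      ip (pu φ p) (pu φ p) = (lam p) ^ 2 ∧
      ip (pv φ p) (pv φ p) = (lam p) ^ 2 ∧
      ip (pu φ p) (pv φ p) = 0

/-- Complexification ℝ³ ↪ ℂ³. -/
def toC (x : E3) : Fin 3 → ℂ := fun j => (x j : ℂ)

/-- Complex-bilinear dot product on ℂ³:  (a,b) = Σⱼ aⱼ bⱼ. -/
def cdot (a b : Fin 3 → ℂ) : ℂ := ∑ j, a j * b j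

/-- ∂_z = ½(∂_u − i ∂_v) for maps into complex normed spaces. -/
def dz {F : Type} [NormedAddCommGroup F] [NormedSpace ℂ F]
    (f : ℝ × ℝ → F) (p : ℝ × ℝ) : F :=
  (2 : ℂ)⁻¹ • (pu f p - Complex.I • pv f p)

/-- ∂_z̄ = ½(∂_u + i ∂_v) for maps into complex normed spaces. -/
def dzbar {F : Type} [NormedAddCommGroup F] [NormedSpace ℂ F]
    (f : ℝ × ℝ → F) (p : ℝ × ℝ) : F :=
  (2 : ℂ)⁻¹ • (pu f p + Complex.I • pv f p)

/-- `f_z := ½(f_u − i f_v) ∈ ℂ³` for a real-vector-valued map `f` (in particular `φ_z`). -/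
def phiz (f : ℝ × ℝ → E3) (p : ℝ × ℝ) : Fin 3 → ℂ :=
  (2 : ℂ)⁻¹ • (toC (pu f p) - Complex.I • toC (pv f p))

/-- `f_z̄ := ½(f_u + i f_v) ∈ ℂ³` for a real-vector-valued map `f` (in particular `φ_z̄`). -/
def phizbar (f : ℝ × ℝ → E3) (p : ℝ × ℝ) : Fin 3 → ℂ :=
  (2 : ℂ)⁻¹ • (toC (pu f p) + Complex.I • toC (pv f p))

/-- The unit normal n = (φ_u × φ_v)/‖φ_u × φ_v‖. -/
def nvec (φ : ℝ × ℝ → E3) (p : ℝ × ℝ) : E3 :=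
  ‖cross (pu φ p) (pv φ p)‖⁻¹ • cross (pu φ p) (pv φ p)

/-- Componentwise Laplacian Δ = ∂_uu + ∂_vv. -/
def lap {F : Type} [NormedAddCommGroup F] [NormedSpace ℝ F]
    (f : ℝ × ℝ → F) (p : ℝ × ℝ) : F := pu (pu f) p + pv (pv f) p

/-- Mean curvature H = ⟨Δφ, n⟩/(2λ²). -/
def mcurv (φ : ℝ × ℝ → E3) (lam : ℝ × ℝ → ℝ) (p : ℝ × ℝ) : ℝ :=
  ip (lap φ p) (nvec φ p) / (2 * (lam p) ^ 2)

/-- μ := (∂_z φ_z, n). -/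
def muQ (φ : ℝ × ℝ → E3) (p : ℝ × ℝ) : ℂ :=
  cdot (dz (phiz φ) p) (toC (nvec φ p))

lemma ip_expand (a b : E3) : ip a b = a 0 * b 0 + a 1 * b 1 + a 2 * b 2 := by
  simp [ip, PiLp.inner_apply, Fin.sum_univ_three]; ring

lemma cross_apply' (a b : E3) : cross a b 0 = a 1 * b 2 - a 2 * b 1
    ∧ cross a b 1 = a 2 * b 0 - a 0 * b 2 ∧ cross a b 2 = a 0 * b 1 - a 1 * b 0 := by
  refine ⟨rfl, rfl, rfl⟩

lemma gram_decomp (a b v : E3) :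
    (ip a a * ip b b - (ip a b)^2) • v =
      (ip v a * ip b b - ip v b * ip a b) • a + (ip v b * ip a a - ip v a * ip a b) • b
        + ip v (cross a b) • cross a b := by
  ext j
  fin_cases j <;>
    simp [ip_expand, cross, PiLp.add_apply, PiLp.smul_apply, smul_eq_mul] <;> ring

lemma ip_cross_left (a b : E3) : ip (cross a b) a = 0 := by
  simp [ip_expand, cross]; ring
lemma ip_cross_right (a b : E3) : ip (cross a b) b = 0 := by
  simp [ip_expand, cross]; ring
lemma ip_cross_self (a b : E3) : ip (cross a b) (cross a b) = ip a a * ip b b - (ip a b)^2 := by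
  simp [ip_expand, cross]; ring
lemma norm_sq_eq_ip (x : E3) : ‖x‖^2 = ip x x := by
  rw [ip]; exact (real_inner_self_eq_norm_sq x).symm
lemma cross_sub_left (a a' b : E3) : cross (a - a') b = cross a b - cross a' b := by
  ext j; fin_cases j <;> simp [cross] <;> ring
lemma cross_sub_right (a b b' : E3) : cross a (b - b') = cross a b - cross a b' := by
  ext j; fin_cases j <;> simp [cross] <;> ring
lemma norm_cross_le (a b : E3) : ‖cross a b‖ ≤ ‖a‖ * ‖b‖ := by
  have h1 : ‖cross a b‖^2 ≤ (‖a‖ * ‖b‖)^2 := by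
    rw [norm_sq_eq_ip, ip_cross_self, mul_pow, norm_sq_eq_ip, norm_sq_eq_ip]
    nlinarith [sq_nonneg (ip a b)]
  have h2 : (0:ℝ) ≤ ‖a‖ * ‖b‖ := by positivity
  nlinarith [norm_nonneg (cross a b)]

variable {F : Type} [NormedAddCommGroup F] [NormedSpace ℝ F] {U : Set (ℝ × ℝ)}

lemma clm_decomp (L : (ℝ × ℝ) →L[ℝ] F) (w : ℝ × ℝ) :
    L w = w.1 • L (1, 0) + w.2 • L (0, 1) := by
  have : w = w.1 • ((1:ℝ), (0:ℝ)) + w.2 • ((0:ℝ), (1:ℝ)) := by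
    ext <;> simp
  conv_lhs => rw [this]
  rw [map_add, map_smul, map_smul]

lemma contDiffOn_pu {f : ℝ × ℝ → F} (hf : ContDiffOn ℝ (⊤:ℕ∞) f U) (hU : IsOpen U) :
    ContDiffOn ℝ (⊤:ℕ∞) (pu f) U := by
  have h := hf.fderiv_of_isOpen hU (m := (⊤:ℕ∞)) (by simp)
  exact (ContinuousLinearMap.apply ℝ F ((1:ℝ), (0:ℝ))).contDiff.comp_contDiffOn h

lemma contDiffOn_pv {f : ℝ × ℝ → F} (hf : ContDiffOn ℝ (⊤:ℕ∞) f U) (hU : IsOpen U) :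
    ContDiffOn ℝ (⊤:ℕ∞) (pv f) U := by
  have h := hf.fderiv_of_isOpen hU (m := (⊤:ℕ∞)) (by simp)
  exact (ContinuousLinearMap.apply ℝ F ((0:ℝ), (1:ℝ))).contDiff.comp_contDiffOn h

lemma diffAt_of_cdOn {f : ℝ × ℝ → F} (hf : ContDiffOn ℝ (⊤:ℕ∞) f U) (hU : IsOpen U)
    {q : ℝ × ℝ} (hq : q ∈ U) : DifferentiableAt ℝ f q :=
  (hf.contDiffAt (hU.mem_nhds hq)).differentiableAt (by simp)

-- equality of partial derivs from EqOn on open set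
lemma pu_congr {f g : ℝ × ℝ → F} (h : ∀ x ∈ U, f x = g x) (hU : IsOpen U)
    {q : ℝ × ℝ} (hq : q ∈ U) : pu f q = pu g q := by
  have : f =ᶠ[nhds q] g := Filter.eventuallyEq_of_mem (hU.mem_nhds hq) h
  rw [pu, pu, this.fderiv_eq]

lemma pv_congr {f g : ℝ × ℝ → F} (h : ∀ x ∈ U, f x = g x) (hU : IsOpen U)
    {q : ℝ × ℝ} (hq : q ∈ U) : pv f q = pv g q := by
  have : f =ᶠ[nhds q] g := Filter.eventuallyEq_of_mem (hU.mem_nhds hq) h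
  rw [pv, pv, this.fderiv_eq]

-- symmetry of second derivatives
lemma mixed_symm {f : ℝ × ℝ → F} (hf : ContDiffOn ℝ (⊤:ℕ∞) f U) (hU : IsOpen U)
    {q : ℝ × ℝ} (hq : q ∈ U) : pu (pv f) q = pv (pu f) q := by
  have hdf : DifferentiableAt ℝ (fderiv ℝ f) q :=
    diffAt_of_cdOn (hf.fderiv_of_isOpen hU (m := (⊤:ℕ∞)) (by simp)) hU hq
  have hs : IsSymmSndFDerivAt ℝ f q :=
    (hf.contDiffAt (hU.mem_nhds hq)).isSymmSndFDerivAt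
      (by simpa using (WithTop.coe_le_coe.mpr (le_top : (2:ℕ∞) ≤ ⊤) : ((2:ℕ∞) : WithTop ℕ∞) ≤ ((⊤:ℕ∞) : WithTop ℕ∞)))
  have e1 : ∀ v w : ℝ × ℝ, fderiv ℝ (fun r => fderiv ℝ f r v) q w
      = fderiv ℝ (fderiv ℝ f) q w v := by
    intro v w
    have : (fun r => fderiv ℝ f r v) = (ContinuousLinearMap.apply ℝ F v) ∘ (fderiv ℝ f) := rfl
    rw [this, fderiv_comp q (ContinuousLinearMap.apply ℝ F v).differentiableAt hdf]
    simp
  show fderiv ℝ (pv f) q (1,0) = fderiv ℝ (pu f) q (0,1)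
  unfold pu pv
  rw [e1, e1, hs]

section ConfLemmas

variable {U : Set (ℝ × ℝ)} {φ : ℝ × ℝ → E3} {lam : ℝ × ℝ → ℝ}

lemma conf_norm_cross (hφ : IsConfImm U φ lam) {q : ℝ × ℝ} (hq : q ∈ U) :
    ‖cross (pu φ q) (pv φ q)‖ = (lam q) ^ 2 := by
  obtain ⟨hUo, hφc, hlc, hpt⟩ := hφ
  obtain ⟨hl, h1, h2, h3⟩ := hpt q hq
  have hsq : ‖cross (pu φ q) (pv φ q)‖ ^ 2 = ((lam q) ^ 2) ^ 2 := by
    rw [norm_sq_eq_ip, ip_cross_self, h1, h2, h3]; ring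
  have h0 : (0:ℝ) ≤ ‖cross (pu φ q) (pv φ q)‖ := norm_nonneg _
  nlinarith [sq_nonneg (lam q)]

lemma conf_nvec_eq (hφ : IsConfImm U φ lam) {q : ℝ × ℝ} (hq : q ∈ U) :
    nvec φ q = ((lam q) ^ 2)⁻¹ • cross (pu φ q) (pv φ q) := by
  rw [nvec, conf_norm_cross hφ hq]

lemma conf_decomp (hφ : IsConfImm U φ lam) {q : ℝ × ℝ} (hq : q ∈ U) (v : E3) :
    v = (((lam q) ^ 2)⁻¹ * ip v (pu φ q)) • pu φ q
        + (((lam q) ^ 2)⁻¹ * ip v (pv φ q)) • pv φ q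
        + ip v (nvec φ q) • nvec φ q := by
  obtain ⟨hl, h1, h2, h3⟩ := hφ.2.2.2 q hq
  have hl2 : (lam q) ^ 2 ≠ 0 := by positivity
  have hg := gram_decomp (pu φ q) (pv φ q) v
  rw [h1, h2, h3] at hg
  have hnv := conf_nvec_eq hφ hq
  have hipn : ip v (nvec φ q) = ((lam q)^2)⁻¹ * ip v (cross (pu φ q) (pv φ q)) := by
    rw [hnv, ip, ip, real_inner_smul_right]
  have h4 : (lam q ^ 2 * lam q ^ 2 - 0 ^ 2) = (lam q ^2)^2 := by ring
  rw [h4] at hg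
  have hthis := congrArg (fun w => (((lam q ^ 2)^2)⁻¹ : ℝ) • w) hg
  simp only [smul_smul, smul_add] at hthis
  rw [inv_mul_cancel₀ (by positivity), one_smul] at hthis
  rw [hipn, hnv, smul_smul]
  nth_rewrite 1 [hthis]
  congr 1
  · congr 1
    · congr 1; field_simp; ring
    · congr 1; field_simp; ring
  · congr 1; ring

lemma conf_diff_pu (hφ : IsConfImm U φ lam) {q : ℝ × ℝ} (hq : q ∈ U) :
    DifferentiableAt ℝ (pu φ) q :=
  diffAt_of_cdOn (contDiffOn_pu hφ.2.1 hφ.1) hφ.1 hq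

lemma conf_diff_pv (hφ : IsConfImm U φ lam) {q : ℝ × ℝ} (hq : q ∈ U) :
    DifferentiableAt ℝ (pv φ) q :=
  diffAt_of_cdOn (contDiffOn_pv hφ.2.1 hφ.1) hφ.1 hq

lemma conf_diff_lam (hφ : IsConfImm U φ lam) {q : ℝ × ℝ} (hq : q ∈ U) :
    DifferentiableAt ℝ lam q :=
  diffAt_of_cdOn hφ.2.2.1 hφ.1 hq

/-- The six first-order identities. -/
lemma conf_ip_uu_u (hφ : IsConfImm U φ lam) {q : ℝ × ℝ} (hq : q ∈ U) :
    ip (pu (pu φ) q) (pu φ q) = lam q * pu lam q := by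
  have hUo := hφ.1
  have hd := conf_diff_pu hφ hq
  have hl := conf_diff_lam hφ hq
  have e1 : pu (fun r => ip (pu φ r) (pu φ r)) q = pu (fun r => lam r * lam r) q := by
    apply pu_congr (fun x hx => ?_) hUo hq
    rw [(hφ.2.2.2 x hx).2.1]; ring
  have e2 : pu (fun r => ip (pu φ r) (pu φ r)) q
      = ip (pu φ q) (pu (pu φ) q) + ip (pu (pu φ) q) (pu φ q) := by
    rw [pu, show (fun r => ip (pu φ r) (pu φ r)) = fun r => @inner ℝ _ _ (pu φ r) (pu φ r) from rfl,
      fderiv_inner_apply ℝ hd hd]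
    rfl
  have e3 : pu (fun r => lam r * lam r) q = lam q * pu lam q + pu lam q * lam q := by
    rw [pu, fderiv_fun_mul hl hl]; simp [pu]; ring
  have : ip (pu φ q) (pu (pu φ) q) = ip (pu (pu φ) q) (pu φ q) := real_inner_comm _ _
  rw [this] at e2
  rw [e1, e3] at e2
  linarith [e2]

end ConfLemmas

section ConfLemmas2

variable {U : Set (ℝ × ℝ)} {φ : ℝ × ℝ → E3} {lam : ℝ × ℝ → ℝ}

lemma pu_ip {f g : ℝ × ℝ → E3} {q : ℝ × ℝ} (hf : DifferentiableAt ℝ f q)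
    (hg : DifferentiableAt ℝ g q) :
    pu (fun r => ip (f r) (g r)) q = ip (f q) (pu g q) + ip (pu f q) (g q) := by
  rw [pu, show (fun r => ip (f r) (g r)) = fun r => @inner ℝ _ _ (f r) (g r) from rfl,
    fderiv_inner_apply ℝ hf hg]
  rfl

lemma pv_ip {f g : ℝ × ℝ → E3} {q : ℝ × ℝ} (hf : DifferentiableAt ℝ f q)
    (hg : DifferentiableAt ℝ g q) :
    pv (fun r => ip (f r) (g r)) q = ip (f q) (pv g q) + ip (pv f q) (g q) := by
  rw [pv, show (fun r => ip (f r) (g r)) = fun r => @inner ℝ _ _ (f r) (g r) from rfl,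
    fderiv_inner_apply ℝ hf hg]
  rfl

lemma pu_lam_mul {q : ℝ × ℝ} (hl : DifferentiableAt ℝ lam q) :
    pu (fun r => lam r * lam r) q = 2 * (lam q * pu lam q) := by
  rw [pu, fderiv_fun_mul hl hl]; simp [pu]; ring

lemma pv_lam_mul {q : ℝ × ℝ} (hl : DifferentiableAt ℝ lam q) :
    pv (fun r => lam r * lam r) q = 2 * (lam q * pv lam q) := by
  rw [pv, fderiv_fun_mul hl hl]; simp [pv]; ring

lemma conf_ip_uv_u (hφ : IsConfImm U φ lam) {q : ℝ × ℝ} (hq : q ∈ U) :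
    ip (pu (pv φ) q) (pu φ q) = lam q * pv lam q := by
  have hd := conf_diff_pu hφ hq
  have e1 : pv (fun r => ip (pu φ r) (pu φ r)) q = pv (fun r => lam r * lam r) q := by
    apply pv_congr (fun x hx => ?_) hφ.1 hq
    rw [(hφ.2.2.2 x hx).2.1]; ring
  rw [pv_ip hd hd, pv_lam_mul (conf_diff_lam hφ hq)] at e1
  rw [← mixed_symm hφ.2.1 hφ.1 hq] at e1
  have : ip (pu φ q) (pu (pv φ) q) = ip (pu (pv φ) q) (pu φ q) := real_inner_comm _ _
  rw [this] at e1
  linarith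

lemma conf_ip_uv_v (hφ : IsConfImm U φ lam) {q : ℝ × ℝ} (hq : q ∈ U) :
    ip (pu (pv φ) q) (pv φ q) = lam q * pu lam q := by
  have hd := conf_diff_pv hφ hq
  have e1 : pu (fun r => ip (pv φ r) (pv φ r)) q = pu (fun r => lam r * lam r) q := by
    apply pu_congr (fun x hx => ?_) hφ.1 hq
    rw [(hφ.2.2.2 x hx).2.2.1]; ring
  rw [pu_ip hd hd, pu_lam_mul (conf_diff_lam hφ hq)] at e1
  have : ip (pv φ q) (pu (pv φ) q) = ip (pu (pv φ) q) (pv φ q) := real_inner_comm _ _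
  rw [this] at e1
  linarith

lemma conf_ip_vv_v (hφ : IsConfImm U φ lam) {q : ℝ × ℝ} (hq : q ∈ U) :
    ip (pv (pv φ) q) (pv φ q) = lam q * pv lam q := by
  have hd := conf_diff_pv hφ hq
  have e1 : pv (fun r => ip (pv φ r) (pv φ r)) q = pv (fun r => lam r * lam r) q := by
    apply pv_congr (fun x hx => ?_) hφ.1 hq
    rw [(hφ.2.2.2 x hx).2.2.1]; ring
  rw [pv_ip hd hd, pv_lam_mul (conf_diff_lam hφ hq)] at e1
  have : ip (pv φ q) (pv (pv φ) q) = ip (pv (pv φ) q) (pv φ q) := real_inner_comm _ _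
  rw [this] at e1
  linarith

lemma conf_ip_uu_v (hφ : IsConfImm U φ lam) {q : ℝ × ℝ} (hq : q ∈ U) :
    ip (pu (pu φ) q) (pv φ q) = -(lam q * pv lam q) := by
  have hdu := conf_diff_pu hφ hq
  have hdv := conf_diff_pv hφ hq
  have e1 : pu (fun r => ip (pu φ r) (pv φ r)) q = pu (fun _ => (0:ℝ)) q := by
    apply pu_congr (fun x hx => ?_) hφ.1 hq
    rw [(hφ.2.2.2 x hx).2.2.2]
  rw [pu_ip hdu hdv] at e1
  have e2 : pu (fun _ => (0:ℝ)) q = 0 := by simp [pu]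
  rw [e2] at e1
  have e3 : ip (pu φ q) (pu (pv φ) q) = lam q * pv lam q := by
    rw [ip, real_inner_comm, ← ip]; exact conf_ip_uv_u hφ hq
  linarith

lemma conf_ip_vv_u (hφ : IsConfImm U φ lam) {q : ℝ × ℝ} (hq : q ∈ U) :
    ip (pv (pv φ) q) (pu φ q) = -(lam q * pu lam q) := by
  have hdu := conf_diff_pu hφ hq
  have hdv := conf_diff_pv hφ hq
  have e1 : pv (fun r => ip (pu φ r) (pv φ r)) q = pv (fun _ => (0:ℝ)) q := by
    apply pv_congr (fun x hx => ?_) hφ.1 hq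
    rw [(hφ.2.2.2 x hx).2.2.2]
  rw [pv_ip hdu hdv] at e1
  have e2 : pv (fun _ => (0:ℝ)) q = 0 := by simp [pv]
  rw [e2] at e1
  rw [← mixed_symm hφ.2.1 hφ.1 hq, conf_ip_uv_v hφ hq] at e1
  have e4 : ip (pu φ q) (pv (pv φ) q) = ip (pv (pv φ) q) (pu φ q) := real_inner_comm _ _
  rw [e4] at e1
  linarith

/-- Structural equations. -/
lemma conf_struct_uu (hφ : IsConfImm U φ lam) {q : ℝ × ℝ} (hq : q ∈ U) :
    pu (pu φ) q = (((lam q) ^ 2)⁻¹ * (lam q * pu lam q)) • pu φ q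
      + (((lam q) ^ 2)⁻¹ * (-(lam q * pv lam q))) • pv φ q
      + ip (pu (pu φ) q) (nvec φ q) • nvec φ q := by
  have h := conf_decomp hφ hq (pu (pu φ) q)
  rw [conf_ip_uu_u hφ hq, conf_ip_uu_v hφ hq] at h
  exact h

lemma conf_struct_uv (hφ : IsConfImm U φ lam) {q : ℝ × ℝ} (hq : q ∈ U) :
    pu (pv φ) q = (((lam q) ^ 2)⁻¹ * (lam q * pv lam q)) • pu φ q
      + (((lam q) ^ 2)⁻¹ * (lam q * pu lam q)) • pv φ q
      + ip (pu (pv φ) q) (nvec φ q) • nvec φ q := by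
  have h := conf_decomp hφ hq (pu (pv φ) q)
  rw [conf_ip_uv_u hφ hq, conf_ip_uv_v hφ hq] at h
  exact h

lemma conf_struct_vv (hφ : IsConfImm U φ lam) {q : ℝ × ℝ} (hq : q ∈ U) :
    pv (pv φ) q = (((lam q) ^ 2)⁻¹ * (-(lam q * pu lam q))) • pu φ q
      + (((lam q) ^ 2)⁻¹ * (lam q * pv lam q)) • pv φ q
      + ip (pv (pv φ) q) (nvec φ q) • nvec φ q := by
  have h := conf_decomp hφ hq (pv (pv φ) q)
  rw [conf_ip_vv_u hφ hq, conf_ip_vv_v hφ hq] at h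
  exact h

end ConfLemmas2

section MuLemmas

variable {U : Set (ℝ × ℝ)} {φ : ℝ × ℝ → E3} {lam : ℝ × ℝ → ℝ}

def toCL : E3 →L[ℝ] (Fin 3 → ℂ) :=
  ContinuousLinearMap.pi (fun j => Complex.ofRealCLM.comp (EuclideanSpace.proj j))

lemma toCL_apply (x : E3) : toCL x = toC x := by
  funext j
  simp [toCL, toC, EuclideanSpace.proj]

lemma phiz_eq : phiz φ = fun r => (2:ℂ)⁻¹ • (toCL (pu φ r) - Complex.I • toCL (pv φ r)) := by
  funext r
  rw [phiz, toCL_apply, toCL_apply]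

lemma pu_phiz (hφ : IsConfImm U φ lam) {q : ℝ × ℝ} (hq : q ∈ U) :
    pu (phiz φ) q = (2:ℂ)⁻¹ • (toC (pu (pu φ) q) - Complex.I • toC (pu (pv φ) q)) := by
  have hdu := conf_diff_pu hφ hq
  have hdv := conf_diff_pv hφ hq
  have h1 : HasFDerivAt (phiz φ)
      ((2:ℂ)⁻¹ • ((toCL.comp (fderiv ℝ (pu φ) q)) -
        Complex.I • (toCL.comp (fderiv ℝ (pv φ) q)))) q := by
    rw [phiz_eq]
    exact (((toCL.hasFDerivAt.comp q hdu.hasFDerivAt).sub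
      ((toCL.hasFDerivAt.comp q hdv.hasFDerivAt).const_smul Complex.I)).const_smul ((2:ℂ)⁻¹))
  rw [pu, h1.fderiv]
  simp only [ContinuousLinearMap.smul_apply, ContinuousLinearMap.sub_apply,
    ContinuousLinearMap.comp_apply, toCL_apply]
  rfl

lemma pv_phiz (hφ : IsConfImm U φ lam) {q : ℝ × ℝ} (hq : q ∈ U) :
    pv (phiz φ) q = (2:ℂ)⁻¹ • (toC (pv (pu φ) q) - Complex.I • toC (pv (pv φ) q)) := by
  have hdu := conf_diff_pu hφ hq
  have hdv := conf_diff_pv hφ hq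
  have h1 : HasFDerivAt (phiz φ)
      ((2:ℂ)⁻¹ • ((toCL.comp (fderiv ℝ (pu φ) q)) -
        Complex.I • (toCL.comp (fderiv ℝ (pv φ) q)))) q := by
    rw [phiz_eq]
    exact (((toCL.hasFDerivAt.comp q hdu.hasFDerivAt).sub
      ((toCL.hasFDerivAt.comp q hdv.hasFDerivAt).const_smul Complex.I)).const_smul ((2:ℂ)⁻¹))
  rw [pv, h1.fderiv]
  simp only [ContinuousLinearMap.smul_apply, ContinuousLinearMap.sub_apply,
    ContinuousLinearMap.comp_apply, toCL_apply]
  rfl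

lemma cdot_formula (x1 x2 x3 x4 n : E3) :
    cdot ((2:ℂ)⁻¹ • ((2:ℂ)⁻¹ • (toC x1 - Complex.I • toC x2)
        - Complex.I • ((2:ℂ)⁻¹ • (toC x3 - Complex.I • toC x4)))) (toC n)
      = (((ip x1 n - ip x4 n) / 4 : ℝ) : ℂ)
        - (((ip x2 n + ip x3 n) / 4 : ℝ) : ℂ) * Complex.I := by
  simp only [cdot, toC, ip_expand, Fin.sum_univ_three, Pi.smul_apply, Pi.sub_apply,
    smul_eq_mul]
  push_cast
  ring_nf
  simp only [Complex.I_sq]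
  ring

lemma conf_muQ (hφ : IsConfImm U φ lam) {q : ℝ × ℝ} (hq : q ∈ U) :
    muQ φ q = (((ip (pu (pu φ) q) (nvec φ q) - ip (pv (pv φ) q) (nvec φ q)) / 4 : ℝ) : ℂ)
      - (((ip (pu (pv φ) q) (nvec φ q)) / 2 : ℝ) : ℂ) * Complex.I := by
  rw [muQ, dz, pu_phiz hφ hq, pv_phiz hφ hq, mixed_symm hφ.2.1 hφ.1 hq, cdot_formula]
  norm_num
  ring
end MuLemmas

section Coeffs

variable (φ ψ : ℝ × ℝ → E3) (lam : ℝ × ℝ → ℝ)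

/-- Christoffel-type coefficients (depend only on `lam`). -/
def cA (q : ℝ × ℝ) : ℝ := ((lam q) ^ 2)⁻¹ * (lam q * pu lam q)
def cB (q : ℝ × ℝ) : ℝ := ((lam q) ^ 2)⁻¹ * (lam q * pv lam q)
/-- Second-fundamental-form coefficients divided by λ². -/
def cE (q : ℝ × ℝ) : ℝ := ((lam q) ^ 2)⁻¹ * ip (pu (pu φ) q) (nvec φ q)
def cF (q : ℝ × ℝ) : ℝ := ((lam q) ^ 2)⁻¹ * ip (pu (pv φ) q) (nvec φ q)
def cG (q : ℝ × ℝ) : ℝ := ((lam q) ^ 2)⁻¹ * ip (pv (pv φ) q) (nvec φ q)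

/-- The frame map. -/
def Wt : ℝ × ℝ → E3 × E3 × E3 := fun q => (φ q, pu φ q, pv φ q)

/-- The bounding function. -/
def Bfun (q : ℝ × ℝ) : ℝ :=
  1 + (|cA lam q| + |cB lam q| + |cE φ lam q| + |cF φ lam q| + |cG φ lam q|)
    * (1 + ‖pu φ q‖ + ‖pv φ q‖ + ‖pu ψ q‖ + ‖pv ψ q‖)

end Coeffs

section Struct

variable {U : Set (ℝ × ℝ)} {φ ψ : ℝ × ℝ → E3} {lam : ℝ × ℝ → ℝ}

lemma struct_uu' (hφ : IsConfImm U φ lam) {q : ℝ × ℝ} (hq : q ∈ U) :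
    pu (pu φ) q = cA lam q • pu φ q - cB lam q • pv φ q
      + cE φ lam q • cross (pu φ q) (pv φ q) := by
  have h := conf_struct_uu hφ hq
  rw [conf_nvec_eq hφ hq] at h
  rw [h, cA, cB, cE, conf_nvec_eq hφ hq]
  rw [ip, real_inner_smul_right, ← ip, smul_smul]
  module

lemma struct_uv' (hφ : IsConfImm U φ lam) {q : ℝ × ℝ} (hq : q ∈ U) :
    pu (pv φ) q = cB lam q • pu φ q + cA lam q • pv φ q
      + cF φ lam q • cross (pu φ q) (pv φ q) := by
  have h := conf_struct_uv hφ hq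
  rw [conf_nvec_eq hφ hq] at h
  rw [h, cA, cB, cF, conf_nvec_eq hφ hq]
  rw [ip, real_inner_smul_right, ← ip, smul_smul]
  module

lemma struct_vv' (hφ : IsConfImm U φ lam) {q : ℝ × ℝ} (hq : q ∈ U) :
    pv (pv φ) q = -(cA lam q) • pu φ q + cB lam q • pv φ q
      + cG φ lam q • cross (pu φ q) (pv φ q) := by
  have h := conf_struct_vv hφ hq
  rw [conf_nvec_eq hφ hq] at h
  rw [h, cA, cB, cG, conf_nvec_eq hφ hq]
  rw [ip, real_inner_smul_right, ← ip, smul_smul]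
  module

lemma coeffs_eq (hφ : IsConfImm U φ lam) (hψ : IsConfImm U ψ lam)
    (hH : ∀ p ∈ U, mcurv φ lam p = mcurv ψ lam p)
    (hmu : ∀ p ∈ U, muQ φ p = muQ ψ p) {q : ℝ × ℝ} (hq : q ∈ U) :
    cE ψ lam q = cE φ lam q ∧ cF ψ lam q = cF φ lam q ∧ cG ψ lam q = cG φ lam q := by
  have hl := (hφ.2.2.2 q hq).1
  have hl2 : (0:ℝ) < (lam q)^2 := by positivity
  set e1 := ip (pu (pu φ) q) (nvec φ q)
  set f1 := ip (pu (pv φ) q) (nvec φ q)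
  set g1 := ip (pv (pv φ) q) (nvec φ q)
  set e2 := ip (pu (pu ψ) q) (nvec ψ q)
  set f2 := ip (pu (pv ψ) q) (nvec ψ q)
  set g2 := ip (pv (pv ψ) q) (nvec ψ q)
  have hm := hmu q hq
  rw [conf_muQ hφ hq, conf_muQ hψ hq] at hm
  have hre : (e1 - g1) / 4 = (e2 - g2) / 4 := by
    have := congrArg Complex.re hm
    simpa using this
  have him : f1 / 2 = f2 / 2 := by
    have := congrArg Complex.im hm
    simpa using this
  have hh := hH q hq
  rw [mcurv, mcurv, lap, lap] at hh
  have hsum : e1 + g1 = e2 + g2 := by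
    have h2 : (0:ℝ) < 2 * lam q ^ 2 := by positivity
    have e3 : ip (pu (pu φ) q + pv (pv φ) q) (nvec φ q) = e1 + g1 := by
      rw [ip, inner_add_left]; rfl
    have e4 : ip (pu (pu ψ) q + pv (pv ψ) q) (nvec ψ q) = e2 + g2 := by
      rw [ip, inner_add_left]; rfl
    rw [e3, e4] at hh
    have h2' : (2 * lam q ^ 2) ≠ 0 := by positivity
    field_simp at hh
    linarith
  have he : e2 = e1 := by linarith
  have hf : f2 = f1 := by linarith
  have hg : g2 = g1 := by linarith
  exact ⟨by rw [cE, cE]; exact congrArg (fun x => (lam q ^ 2)⁻¹ * x) he,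
    by rw [cF, cF]; exact congrArg (fun x => (lam q ^ 2)⁻¹ * x) hf,
    by rw [cG, cG]; exact congrArg (fun x => (lam q ^ 2)⁻¹ * x) hg⟩

end Struct

section FrameBound

variable {U : Set (ℝ × ℝ)} {φ ψ : ℝ × ℝ → E3} {lam : ℝ × ℝ → ℝ}

lemma cross_diff (a a' b b' : E3) :
    cross a b - cross a' b' = cross (a - a') b + cross a' (b - b') := by
  rw [cross_sub_left, cross_sub_right]; abel

lemma D_bound {m c1 c2 c3 : ℝ} {X Y a b : E3} (hX : ‖X‖ ≤ m) (hY : ‖Y‖ ≤ m) :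
    ‖c1 • X + c2 • Y + c3 • (cross X b + cross a Y)‖
      ≤ (|c1| + |c2| + |c3| * (‖b‖ + ‖a‖)) * m := by
  have hm : (0:ℝ) ≤ m := le_trans (norm_nonneg _) hX
  have t1 : ‖c1 • X + c2 • Y + c3 • (cross X b + cross a Y)‖
      ≤ ‖c1 • X‖ + ‖c2 • Y‖ + ‖c3 • (cross X b + cross a Y)‖ :=
    norm_add₃_le
  have t2 : ‖c1 • X‖ = |c1| * ‖X‖ := by rw [norm_smul, Real.norm_eq_abs]
  have t3 : ‖c2 • Y‖ = |c2| * ‖Y‖ := by rw [norm_smul, Real.norm_eq_abs]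
  have t4 : ‖c3 • (cross X b + cross a Y)‖ ≤ |c3| * (‖X‖ * ‖b‖ + ‖a‖ * ‖Y‖) := by
    rw [norm_smul, Real.norm_eq_abs]
    gcongr
    exact le_trans (norm_add_le _ _) (add_le_add (norm_cross_le _ _) (norm_cross_le _ _))
  have hbn : (0:ℝ) ≤ ‖b‖ := norm_nonneg _
  have han : (0:ℝ) ≤ ‖a‖ := norm_nonneg _
  nlinarith [mul_nonneg (abs_nonneg c1) (sub_nonneg.mpr hX),
    mul_nonneg (abs_nonneg c2) (sub_nonneg.mpr hY),
    mul_nonneg (mul_nonneg (abs_nonneg c3) hbn) (sub_nonneg.mpr hX),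
    mul_nonneg (mul_nonneg (abs_nonneg c3) han) (sub_nonneg.mpr hY)]

lemma Wt_diffAt (hφ : IsConfImm U φ lam) {q : ℝ × ℝ} (hq : q ∈ U) :
    DifferentiableAt ℝ (Wt φ) q :=
  (diffAt_of_cdOn hφ.2.1 hφ.1 hq).prodMk
    ((conf_diff_pu hφ hq).prodMk (conf_diff_pv hφ hq))

lemma Wt_hasFDeriv (hφ : IsConfImm U φ lam) {q : ℝ × ℝ} (hq : q ∈ U) :
    HasFDerivAt (Wt φ) ((fderiv ℝ φ q).prod
      ((fderiv ℝ (pu φ) q).prod (fderiv ℝ (pv φ) q))) q :=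
  ((diffAt_of_cdOn hφ.2.1 hφ.1 hq).hasFDerivAt).prodMk
    (((conf_diff_pu hφ hq).hasFDerivAt).prodMk ((conf_diff_pv hφ hq).hasFDerivAt))

lemma Wt_pu (hφ : IsConfImm U φ lam) {q : ℝ × ℝ} (hq : q ∈ U) :
    pu (Wt φ) q = (pu φ q, pu (pu φ) q, pu (pv φ) q) := by
  rw [pu, (Wt_hasFDeriv hφ hq).fderiv]; rfl

lemma Wt_pv (hφ : IsConfImm U φ lam) {q : ℝ × ℝ} (hq : q ∈ U) :
    pv (Wt φ) q = (pv φ q, pv (pu φ) q, pv (pv φ) q) := by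
  rw [pv, (Wt_hasFDeriv hφ hq).fderiv]; rfl

set_option maxHeartbeats 1000000 in
lemma frame_bound (hφ : IsConfImm U φ lam) (hψ : IsConfImm U ψ lam)
    (hH : ∀ p ∈ U, mcurv φ lam p = mcurv ψ lam p)
    (hmu : ∀ p ∈ U, muQ φ p = muQ ψ p) {q : ℝ × ℝ} (hq : q ∈ U) :
    ‖pu (Wt φ) q - pu (Wt ψ) q‖ ≤ Bfun φ ψ lam q * ‖Wt φ q - Wt ψ q‖
    ∧ ‖pv (Wt φ) q - pv (Wt ψ) q‖ ≤ Bfun φ ψ lam q * ‖Wt φ q - Wt ψ q‖ := by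
  obtain ⟨hce, hcf, hcg⟩ := coeffs_eq hφ hψ hH hmu hq
  set X := pu φ q - pu ψ q with hXdef
  set Y := pv φ q - pv ψ q with hYdef
  set m := ‖Wt φ q - Wt ψ q‖ with hmdef
  have hX : ‖X‖ ≤ m := by
    have : X = ((Wt φ q - Wt ψ q).2).1 := rfl
    rw [this]
    exact le_trans (norm_fst_le _) (le_trans (norm_snd_le _) le_rfl)
  have hY : ‖Y‖ ≤ m := by
    have : Y = ((Wt φ q - Wt ψ q).2).2 := rfl
    rw [this]
    exact le_trans (norm_snd_le _) (le_trans (norm_snd_le _) le_rfl)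
  have hZ : ‖φ q - ψ q‖ ≤ m := by
    have : φ q - ψ q = (Wt φ q - Wt ψ q).1 := rfl
    rw [this]; exact norm_fst_le _
  have hm : (0:ℝ) ≤ m := norm_nonneg _
  -- second components
  have h2 : pu (pu φ) q - pu (pu ψ) q
      = cA lam q • X + (-(cB lam q)) • Y
        + cE φ lam q • (cross X (pv φ q) + cross (pu ψ q) Y) := by
    rw [struct_uu' hφ hq, struct_uu' hψ hq, hce,
      show cross (pu φ q) (pv φ q) = cross (pu ψ q) (pv ψ q)
        + (cross X (pv φ q) + cross (pu ψ q) Y) by rw [hXdef, hYdef, ← cross_diff]; abel]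
    module
  have h3 : pu (pv φ) q - pu (pv ψ) q
      = cB lam q • X + cA lam q • Y
        + cF φ lam q • (cross X (pv φ q) + cross (pu ψ q) Y) := by
    rw [struct_uv' hφ hq, struct_uv' hψ hq, hcf,
      show cross (pu φ q) (pv φ q) = cross (pu ψ q) (pv ψ q)
        + (cross X (pv φ q) + cross (pu ψ q) Y) by rw [hXdef, hYdef, ← cross_diff]; abel]
    module
  have h4 : pv (pv φ) q - pv (pv ψ) q
      = (-(cA lam q)) • X + cB lam q • Y
        + cG φ lam q • (cross X (pv φ q) + cross (pu ψ q) Y) := by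
    rw [struct_vv' hφ hq, struct_vv' hψ hq, hcg,
      show cross (pu φ q) (pv φ q) = cross (pu ψ q) (pv ψ q)
        + (cross X (pv φ q) + cross (pu ψ q) Y) by rw [hXdef, hYdef, ← cross_diff]; abel]
    module
  have hb2 := D_bound (c1 := cA lam q) (c2 := -(cB lam q)) (c3 := cE φ lam q)
    (a := pu ψ q) (b := pv φ q) hX hY
  have hb3 := D_bound (c1 := cB lam q) (c2 := cA lam q) (c3 := cF φ lam q)
    (a := pu ψ q) (b := pv φ q) hX hY
  have hb4 := D_bound (c1 := -(cA lam q)) (c2 := cB lam q) (c3 := cG φ lam q)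
    (a := pu ψ q) (b := pv φ q) hX hY
  rw [abs_neg] at hb2 hb4
  have hBfun : Bfun φ ψ lam q = 1 + (|cA lam q| + |cB lam q| + |cE φ lam q|
      + |cF φ lam q| + |cG φ lam q|)
    * (1 + ‖pu φ q‖ + ‖pv φ q‖ + ‖pu ψ q‖ + ‖pv ψ q‖) := rfl
  have habs : (0:ℝ) ≤ |cA lam q| := abs_nonneg _
  have habs2 : (0:ℝ) ≤ |cB lam q| := abs_nonneg _
  have habs3 : (0:ℝ) ≤ |cE φ lam q| := abs_nonneg _
  have habs4 : (0:ℝ) ≤ |cF φ lam q| := abs_nonneg _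
  have habs5 : (0:ℝ) ≤ |cG φ lam q| := abs_nonneg _
  have hn1 : (0:ℝ) ≤ ‖pu φ q‖ := norm_nonneg _
  have hn2 : (0:ℝ) ≤ ‖pv φ q‖ := norm_nonneg _
  have hn3 : (0:ℝ) ≤ ‖pu ψ q‖ := norm_nonneg _
  have hn4 : (0:ℝ) ≤ ‖pv ψ q‖ := norm_nonneg _
  set S := |cA lam q| + |cB lam q| + |cE φ lam q| + |cF φ lam q| + |cG φ lam q| with hS
  set N0 := ‖pu φ q‖ + ‖pv φ q‖ + ‖pu ψ q‖ + ‖pv ψ q‖ with hN0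
  have hSnn : 0 ≤ S := by rw [hS]; positivity
  have hN0nn : 0 ≤ N0 := by rw [hN0]; positivity
  have hBexp : Bfun φ ψ lam q = 1 + S * (1 + N0) := by rw [hBfun, hN0]; ring
  have hring : S * (1 + N0) = S + S * N0 := by ring
  have hB1 : 1 ≤ Bfun φ ψ lam q := by
    rw [hBexp]
    nlinarith [mul_nonneg hSnn (by linarith : (0:ℝ) ≤ 1 + N0)]
  have k2 : |cE φ lam q| * (‖pv φ q‖ + ‖pu ψ q‖) ≤ S * N0 :=
    mul_le_mul (by linarith) (by linarith) (by positivity) hSnn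
  have k3 : |cF φ lam q| * (‖pv φ q‖ + ‖pu ψ q‖) ≤ S * N0 :=
    mul_le_mul (by linarith) (by linarith) (by positivity) hSnn
  have k4 : |cG φ lam q| * (‖pv φ q‖ + ‖pu ψ q‖) ≤ S * N0 :=
    mul_le_mul (by linarith) (by linarith) (by positivity) hSnn
  have hco2 : |cA lam q| + |cB lam q| + |cE φ lam q| * (‖pv φ q‖ + ‖pu ψ q‖)
      ≤ Bfun φ ψ lam q := by rw [hBexp]; linarith
  have hco3 : |cB lam q| + |cA lam q| + |cF φ lam q| * (‖pv φ q‖ + ‖pu ψ q‖)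
      ≤ Bfun φ ψ lam q := by rw [hBexp]; linarith
  have hco4 : |cA lam q| + |cB lam q| + |cG φ lam q| * (‖pv φ q‖ + ‖pu ψ q‖)
      ≤ Bfun φ ψ lam q := by rw [hBexp]; linarith
  have hb2' := le_trans hb2 (mul_le_mul_of_nonneg_right hco2 hm)
  have hb3' := le_trans hb3 (mul_le_mul_of_nonneg_right hco3 hm)
  have hb4' := le_trans hb4 (mul_le_mul_of_nonneg_right hco4 hm)
  have hXm : ∀ z : E3, ‖z‖ ≤ m → ‖z‖ ≤ Bfun φ ψ lam q * m := by
    intro z hz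
    calc ‖z‖ ≤ m := hz
    _ = 1 * m := (one_mul m).symm
    _ ≤ Bfun φ ψ lam q * m := mul_le_mul_of_nonneg_right hB1 hm
  constructor
  · have hrw : pu (Wt φ) q - pu (Wt ψ) q
        = (X, pu (pu φ) q - pu (pu ψ) q, pu (pv φ) q - pu (pv ψ) q) := by
      rw [Wt_pu hφ hq, Wt_pu hψ hq]; rfl
    rw [hrw, h2, h3]
    rw [Prod.norm_def, Prod.norm_def]
    exact max_le (hXm X hX) (max_le hb2' hb3')
  · have hrw : pv (Wt φ) q - pv (Wt ψ) q
        = (Y, pv (pu φ) q - pv (pu ψ) q, pv (pv φ) q - pv (pv ψ) q) := by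
      rw [Wt_pv hφ hq, Wt_pv hψ hq]; rfl
    rw [hrw, h4, ← mixed_symm hφ.2.1 hφ.1 hq, ← mixed_symm hψ.2.1 hψ.1 hq, h3]
    rw [Prod.norm_def, Prod.norm_def]
    exact max_le (hXm Y hY) (max_le hb3' hb4')

end FrameBound

section Cont

variable {U : Set (ℝ × ℝ)} {φ ψ : ℝ × ℝ → E3} {lam : ℝ × ℝ → ℝ}

lemma cont_coord (j : Fin 3) : Continuous fun x : E3 => x j :=
  (continuous_apply j).comp (PiLp.lipschitzWith_ofLp 2 _).continuous

lemma continuous_cross : Continuous fun p : E3 × E3 => cross p.1 p.2 := by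
  unfold cross
  apply Continuous.comp
  · exact ((PiLp.antilipschitzWith_ofLp 2 (fun _ : Fin 3 => ℝ)).to_rightInverse
      (WithLp.equiv 2 _).apply_symm_apply).continuous
  · apply continuous_pi
    intro i
    have c : ∀ (j : Fin 3), Continuous fun p : E3 × E3 => p.1 j :=
      fun j => (cont_coord j).comp continuous_fst
    have d : ∀ (j : Fin 3), Continuous fun p : E3 × E3 => p.2 j :=
      fun j => (cont_coord j).comp continuous_snd
    fin_cases i
    · exact (((c 1).mul (d 2)).sub ((c 2).mul (d 1)))
    · exact (((c 2).mul (d 0)).sub ((c 0).mul (d 2)))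
    · exact (((c 0).mul (d 1)).sub ((c 1).mul (d 0)))

lemma contOn_cross {f g : ℝ × ℝ → E3} (hf : ContinuousOn f U) (hg : ContinuousOn g U) :
    ContinuousOn (fun q => cross (f q) (g q)) U :=
  continuous_cross.comp_continuousOn (hf.prodMk hg)

lemma contOn_ip {f g : ℝ × ℝ → E3} (hf : ContinuousOn f U) (hg : ContinuousOn g U) :
    ContinuousOn (fun q => ip (f q) (g q)) U :=
  hf.inner hg

lemma conf_lam_ne (hφ : IsConfImm U φ lam) {q : ℝ × ℝ} (hq : q ∈ U) : lam q ≠ 0 :=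
  (hφ.2.2.2 q hq).1.ne'

lemma conf_nvec_contOn (hφ : IsConfImm U φ lam) : ContinuousOn (nvec φ) U := by
  have h1 : ContinuousOn (fun q => ((lam q) ^ 2)⁻¹ • cross (pu φ q) (pv φ q)) U := by
    apply ContinuousOn.fun_smul
    · exact ((hφ.2.2.1.continuousOn.pow 2).inv₀ fun q hq =>
        pow_ne_zero 2 (conf_lam_ne hφ hq))
    · exact contOn_cross (contDiffOn_pu hφ.2.1 hφ.1).continuousOn
        (contDiffOn_pv hφ.2.1 hφ.1).continuousOn
  exact h1.congr fun q hq => conf_nvec_eq hφ hq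

lemma Bfun_contOn (hφ : IsConfImm U φ lam) (hψ : IsConfImm U ψ lam) :
    ContinuousOn (Bfun φ ψ lam) U := by
  have hUo := hφ.1
  have hlam := hφ.2.2.1.continuousOn
  have hinv : ContinuousOn (fun q => ((lam q) ^ 2)⁻¹) U :=
    (hlam.pow 2).inv₀ fun q hq => pow_ne_zero 2 (conf_lam_ne hφ hq)
  have hpu := (contDiffOn_pu hφ.2.1 hUo).continuousOn
  have hpv := (contDiffOn_pv hφ.2.1 hUo).continuousOn
  have hpuψ := (contDiffOn_pu hψ.2.1 hUo).continuousOn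
  have hpvψ := (contDiffOn_pv hψ.2.1 hUo).continuousOn
  have hpuu := (contDiffOn_pu (contDiffOn_pu hφ.2.1 hUo) hUo).continuousOn
  have hpuv := (contDiffOn_pu (contDiffOn_pv hφ.2.1 hUo) hUo).continuousOn
  have hpvv := (contDiffOn_pv (contDiffOn_pv hφ.2.1 hUo) hUo).continuousOn
  have hpulam := (contDiffOn_pu hφ.2.2.1 hUo).continuousOn
  have hpvlam := (contDiffOn_pv hφ.2.2.1 hUo).continuousOn
  have hn := conf_nvec_contOn hφ
  have hcA : ContinuousOn (cA lam) U := hinv.mul (hlam.mul hpulam)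
  have hcB : ContinuousOn (cB lam) U := hinv.mul (hlam.mul hpvlam)
  have hcE : ContinuousOn (cE φ lam) U := hinv.mul (contOn_ip hpuu hn)
  have hcF : ContinuousOn (cF φ lam) U := hinv.mul (contOn_ip hpuv hn)
  have hcG : ContinuousOn (cG φ lam) U := hinv.mul (contOn_ip hpvv hn)
  unfold Bfun
  exact continuousOn_const.add
    (((((hcA.abs.add hcB.abs).add hcE.abs).add hcF.abs).add hcG.abs).mul
      ((((continuousOn_const.add hpu.norm).add hpv.norm).add hpuψ.norm).add hpvψ.norm))

lemma Wt_contOn (hφ : IsConfImm U φ lam) : ContinuousOn (Wt φ) U :=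
  hφ.2.1.continuousOn.prodMk ((contDiffOn_pu hφ.2.1 hφ.1).continuousOn.prodMk
    (contDiffOn_pv hφ.2.1 hφ.1).continuousOn)

end Cont

section Local

open Set Metric

variable {U : Set (ℝ × ℝ)} {φ ψ : ℝ × ℝ → E3} {lam : ℝ × ℝ → ℝ}

set_option maxHeartbeats 1000000 in
lemma local_eq (hφ : IsConfImm U φ lam) (hψ : IsConfImm U ψ lam)
    (hH : ∀ p ∈ U, mcurv φ lam p = mcurv ψ lam p)
    (hmu : ∀ p ∈ U, muQ φ p = muQ ψ p) {q₀ : ℝ × ℝ} (hq₀ : q₀ ∈ U)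
    (heq : Wt φ q₀ = Wt ψ q₀) :
    ∃ ε > 0, ∀ q ∈ Metric.ball q₀ ε, Wt φ q = Wt ψ q := by
  have hUo := hφ.1
  obtain ⟨ε, hε, hball⟩ := Metric.nhds_basis_closedBall.mem_iff.mp (hUo.mem_nhds hq₀)
  refine ⟨ε, hε, ?_⟩
  intro q hq
  -- bound of Bfun on the closed ball
  obtain ⟨C, hC⟩ := (isCompact_closedBall q₀ ε).exists_bound_of_continuousOn
    ((Bfun_contOn hφ hψ).mono hball)
  set dq := q - q₀ with hdq
  set γ : ℝ → ℝ × ℝ := fun t => q₀ + t • dq with hγ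
  have hγcb : ∀ t ∈ Icc (0:ℝ) 1, γ t ∈ Metric.closedBall q₀ ε := by
    intro t ht
    rw [Metric.mem_closedBall, dist_eq_norm, hγ]
    simp only [add_sub_cancel_left]
    rw [norm_smul, Real.norm_eq_abs, _root_.abs_of_nonneg ht.1]
    have hqn : ‖dq‖ ≤ ε := by
      rw [hdq, ← dist_eq_norm]
      exact le_of_lt (Metric.mem_ball.mp hq)
    calc t * ‖dq‖ ≤ 1 * ‖dq‖ := by
          apply mul_le_mul_of_nonneg_right ht.2 (norm_nonneg _)
    _ = ‖dq‖ := one_mul _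
    _ ≤ ε := hqn
  have hγU : ∀ t ∈ Icc (0:ℝ) 1, γ t ∈ U := fun t ht => hball (hγcb t ht)
  set f : ℝ → E3 × E3 × E3 := fun t => Wt φ (γ t) - Wt ψ (γ t) with hf
  set f' : ℝ → E3 × E3 × E3 := fun t =>
    dq.1 • (pu (Wt φ) (γ t) - pu (Wt ψ) (γ t))
      + dq.2 • (pv (Wt φ) (γ t) - pv (Wt ψ) (γ t)) with hf'
  have hγd : ∀ t : ℝ, HasDerivAt γ dq t := by
    intro t
    have h := ((hasDerivAt_id t).smul_const dq).const_add q₀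
    simpa [hγ] using h
  have hWd : ∀ (χ : ℝ × ℝ → E3) (hχ : IsConfImm U χ lam), ∀ t ∈ Icc (0:ℝ) 1,
      HasDerivAt (fun s => Wt χ (γ s))
        (dq.1 • pu (Wt χ) (γ t) + dq.2 • pv (Wt χ) (γ t)) t := by
    intro χ hχ t ht
    have hd := (Wt_diffAt hχ (hγU t ht)).hasFDerivAt.comp_hasDerivAt t (hγd t)
    have : fderiv ℝ (Wt χ) (γ t) dq
        = dq.1 • pu (Wt χ) (γ t) + dq.2 • pv (Wt χ) (γ t) := by
      rw [pu, pv]; exact clm_decomp _ dq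
    rw [this] at hd
    exact hd
  have hfd : ∀ t ∈ Icc (0:ℝ) 1, HasDerivAt f (f' t) t := by
    intro t ht
    have h := (hWd φ hφ t ht).sub (hWd ψ hψ t ht)
    have e : (dq.1 • pu (Wt φ) (γ t) + dq.2 • pv (Wt φ) (γ t))
        - (dq.1 • pu (Wt ψ) (γ t) + dq.2 • pv (Wt ψ) (γ t)) = f' t := by
      rw [hf']; module
    rw [e] at h
    exact h
  have hcont : ContinuousOn f (Icc 0 1) :=
    fun t ht => (hfd t ht).continuousAt.continuousWithinAt
  have h0 : ‖f 0‖ ≤ 0 := by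
    have : γ 0 = q₀ := by rw [hγ]; simp
    rw [hf]
    simp only [this, heq, sub_self, norm_zero, le_refl]
  set K := (|dq.1| + |dq.2|) * C with hK
  have hbound : ∀ t ∈ Ico (0:ℝ) 1, ‖f' t‖ ≤ K * ‖f t‖ + 0 := by
    intro t ht
    have ht' : t ∈ Icc (0:ℝ) 1 := ⟨ht.1, le_of_lt ht.2⟩
    have hU' := hγU t ht'
    obtain ⟨hbu, hbv⟩ := frame_bound hφ hψ hH hmu hU'
    have hBC : Bfun φ ψ lam (γ t) ≤ C := by
      have := hC _ (hγcb t ht')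
      rw [Real.norm_eq_abs] at this
      exact le_trans (le_abs_self _) this
    have hfn : (0:ℝ) ≤ ‖f t‖ := norm_nonneg _
    have hft : ‖Wt φ (γ t) - Wt ψ (γ t)‖ = ‖f t‖ := by rw [hf]
    rw [hft] at hbu hbv
    have h1 : ‖f' t‖ ≤ |dq.1| * ‖pu (Wt φ) (γ t) - pu (Wt ψ) (γ t)‖
        + |dq.2| * ‖pv (Wt φ) (γ t) - pv (Wt ψ) (γ t)‖ := by
      rw [hf']
      refine le_trans (norm_add_le _ _) ?_
      rw [norm_smul, norm_smul, Real.norm_eq_abs, Real.norm_eq_abs]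
    have h2 : Bfun φ ψ lam (γ t) * ‖f t‖ ≤ C * ‖f t‖ :=
      mul_le_mul_of_nonneg_right hBC hfn
    have h3 : |dq.1| * ‖pu (Wt φ) (γ t) - pu (Wt ψ) (γ t)‖ ≤ |dq.1| * (C * ‖f t‖) :=
      mul_le_mul_of_nonneg_left (le_trans hbu h2) (abs_nonneg _)
    have h4 : |dq.2| * ‖pv (Wt φ) (γ t) - pv (Wt ψ) (γ t)‖ ≤ |dq.2| * (C * ‖f t‖) :=
      mul_le_mul_of_nonneg_left (le_trans hbv h2) (abs_nonneg _)
    rw [hK]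
    have : (|dq.1| + |dq.2|) * C * ‖f t‖ + 0
        = |dq.1| * (C * ‖f t‖) + |dq.2| * (C * ‖f t‖) := by ring
    rw [this]
    linarith
  have hgron := norm_le_gronwallBound_of_norm_deriv_right_le hcont
    (fun t ht => (hfd t ⟨ht.1, le_of_lt ht.2⟩).hasDerivWithinAt) h0 hbound
  have hf1 : ‖f 1‖ ≤ 0 := by
    have := hgron 1 ⟨zero_le_one, le_refl 1⟩
    rwa [sub_zero, gronwallBound_ε0, zero_mul] at this
  have hγ1 : γ 1 = q := by rw [hγ]; simp [hdq]
  have : f 1 = 0 := norm_le_zero_iff.mp hf1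
  rw [hf] at this
  simp only [hγ1] at this
  exact sub_eq_zero.mp this

end Local

/-- uniqueness in the λ-H representation, pointwise-anchored form:
two conformal immersions on a nonempty connected open set with the same conformal
factor, the same mean curvature and the same μ, agreeing together with their first
derivatives at one point, coincide on U. -/
theorem lambdaH_representation_uniqueness_anchored
    (U : Set (ℝ × ℝ)) (hU : IsConnected U)
    (φ ψ : ℝ × ℝ → E3) (lam : ℝ × ℝ → ℝ)
    (hφ : IsConfImm U φ lam) (hψ : IsConfImm U ψ lam)
    (hH : ∀ p ∈ U, mcurv φ lam p = mcurv ψ lam p)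
    (hmu : ∀ p ∈ U, muQ φ p = muQ ψ p)
    (p : ℝ × ℝ) (hp : p ∈ U)
    (h0 : φ p = ψ p) (h1 : pu φ p = pu ψ p) (h2 : pv φ p = pv ψ p) :
    ∀ q ∈ U, φ q = ψ q := by
  have hUo := hφ.1
  set S := {q : ℝ × ℝ | q ∈ U ∧ Wt φ q = Wt ψ q} with hS
  have hSopen : IsOpen S := by
    rw [Metric.isOpen_iff]
    rintro q₀ ⟨hq₀U, hq₀eq⟩
    obtain ⟨ε1, hε1, hb1⟩ := local_eq hφ hψ hH hmu hq₀U hq₀eq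
    obtain ⟨ε2, hε2, hb2⟩ := Metric.isOpen_iff.mp hUo q₀ hq₀U
    refine ⟨min ε1 ε2, lt_min hε1 hε2, ?_⟩
    intro q hq
    rw [Metric.mem_ball, lt_min_iff] at hq
    exact ⟨hb2 (Metric.mem_ball.mpr hq.2), hb1 q (Metric.mem_ball.mpr hq.1)⟩
  have hpS : p ∈ S := by
    refine ⟨hp, ?_⟩
    rw [Wt, Wt, h0, h1, h2]
  have hUS : U ⊆ S := by
    apply hU.isPreconnected.subset_of_closure_inter_subset hSopen ⟨p, hp, hpS⟩
    intro x ⟨hxc, hxU⟩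
    refine ⟨hxU, ?_⟩
    have hct : ContinuousAt (fun r => Wt φ r - Wt ψ r) x :=
      ((Wt_diffAt hφ hxU).sub (Wt_diffAt hψ hxU)).continuousAt
    have hne : (nhdsWithin x S).NeBot := mem_closure_iff_nhdsWithin_neBot.mp hxc
    have ht1 : Filter.Tendsto (fun r => Wt φ r - Wt ψ r) (nhdsWithin x S)
        (nhds (Wt φ x - Wt ψ x)) := hct.continuousWithinAt.tendsto
    have ht2 : Filter.Tendsto (fun r => Wt φ r - Wt ψ r) (nhdsWithin x S)
        (nhds 0) := by
      apply Filter.Tendsto.congr' _ tendsto_const_nhds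
      filter_upwards [self_mem_nhdsWithin] with r hr
      rw [hr.2, sub_self]
    have := tendsto_nhds_unique ht1 ht2
    exact sub_eq_zero.mp this
  intro q hq
  have := (hUS hq).2
  rw [Wt, Wt] at this
  exact congrArg Prod.fst this
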